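/- Let f be 0-strongly regular (i.e., have a monotone hazard rate: the hazard ratio f(x)/|f'(x)| is nonincreasing in x on [0,∞)), and let x₁ > 0 be a point with f(x₁) > 0 satisfying f(x₁)/|f'(x₁)| > x₁. Then f(0) < e · f(x₁), where e is Euler's number. -/

import Mathlib

/-- If `f` is 0-strongly regular (monotone hazard rate) on `[0,∞)`,
and `x₁ > 0` has `f x₁ > 0` and hazard ratio greater than `x₁`, then
`f 0 < e · f x₁`. -/
theorem mhr_peak_bound
    (f : ℝ → ℝ)
    (hf_nonneg : ∀ x, 0 ≤ x → 0 ≤ f x)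
    (hf_anti : ∀ x y, 0 ≤ x → x ≤ y → f y ≤ f x)
    (hf_diff : ∀ x, 0 ≤ x → DifferentiableAt ℝ f x)
    (hf_deriv_neg : ∀ x, 0 ≤ x → deriv f x < 0)
    (hf_mhr : ∀ x₁ x₂, 0 ≤ x₁ → x₁ ≤ x₂ →
      f x₂ / |deriv f x₂| ≤ f x₁ / |deriv f x₁|)
    (x₁ : ℝ) (hx₁ : 0 < x₁) (hfx₁ : 0 < f x₁)
    (hhaz : x₁ < f x₁ / |deriv f x₁|) :
    f 0 < Real.exp 1 * f x₁ := by
  set g : ℝ → ℝ := fun x => f x * Real.exp (x / x₁) with hg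
  -- key pointwise inequality
  have key : ∀ x, 0 ≤ x → x ≤ x₁ → x₁ * (-(deriv f x)) < f x := by
    intro x hx0 hxle
    have hd := hf_deriv_neg x hx0
    have habs : |deriv f x| = -(deriv f x) := abs_of_neg hd
    have h1 := hf_mhr x x₁ hx0 hxle
    have h2 : x₁ < f x / (-(deriv f x)) := by
      rw [← habs]; exact lt_of_lt_of_le hhaz h1
    exact (lt_div_iff₀ (neg_pos.2 hd)).1 h2
  have hderiv : ∀ x ∈ Set.Icc (0:ℝ) x₁, HasDerivAt g
      (deriv f x * Real.exp (x / x₁) + f x * (Real.exp (x / x₁) * (1 / x₁))) x := by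
    intro x hx
    have hf' : HasDerivAt f (deriv f x) x := (hf_diff x hx.1).hasDerivAt
    have hexp : HasDerivAt (fun y : ℝ => Real.exp (y / x₁)) (Real.exp (x / x₁) * (1 / x₁)) x := by
      have := (Real.hasDerivAt_exp (x / x₁)).comp x ((hasDerivAt_id x).div_const x₁)
      exact ((hasDerivAt_id x).div_const x₁).exp
    exact hf'.mul hexp
  have hcont : ContinuousOn g (Set.Icc (0:ℝ) x₁) := fun x hx =>
    ((hderiv x hx).continuousAt).continuousWithinAt
  have hpos : ∀ x ∈ interior (Set.Icc (0:ℝ) x₁), 0 < deriv g x := by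
    intro x hx
    rw [interior_Icc] at hx
    have hd := (hderiv x ⟨hx.1.le, hx.2.le⟩).deriv
    rw [hd]
    have hE : 0 < Real.exp (x / x₁) := Real.exp_pos _
    have hk := key x hx.1.le hx.2.le
    have hx₁' : (0:ℝ) < x₁ := hx₁
    have : -(deriv f x) < f x / x₁ := by
      rw [lt_div_iff₀ hx₁']; nlinarith
    have h3 := mul_lt_mul_of_pos_right this hE
    have h4 : f x * (Real.exp (x / x₁) * (1 / x₁)) = f x / x₁ * Real.exp (x / x₁) := by ring
    linarith [h3, h4]
  have hmono := strictMonoOn_of_deriv_pos (convex_Icc 0 x₁) hcont hpos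
  have h := hmono (Set.left_mem_Icc.2 hx₁.le) (Set.right_mem_Icc.2 hx₁.le) hx₁
  simp only [hg] at h
  rw [zero_div, Real.exp_zero, mul_one, div_self hx₁.ne'] at h
  linarith [h]
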